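/- Fix integers b ≥ 2, e ≥ 1, u ≥ 1, and let g be a positive integer such that every nonnegative integer is the sum of g e-th powers of nonnegative integers. If x is the least positive integer satisfying S_{e,b}(x) = u, and n is the number of base-b digits of x, then u ≤ n·(b-1)^e and n ≤ ⌊u/(b-1)^e⌋ + g. -/

import Mathlib

/-- `S e b x` is the sum of the `e`-th powers of the base-`b` digits of `x`. -/
def S (e b x : ℕ) : ℕ := ((Nat.digits b x).map (fun a => a ^ e)).sum

lemma filter_pow_sum (e : ℕ) (he : 1 ≤ e) (l : List ℕ) :
    (((l.filter (fun a => a ≠ 0)).map (fun a => a ^ e)).sum)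
      = ((l.map (fun a => a ^ e)).sum) := by
  induction l with
  | nil => simp
  | cons h t ih =>
    by_cases h0 : h = 0
    · subst h0
      rw [List.filter_cons_of_neg (by simp)]
      rw [List.map_cons, List.sum_cons, Nat.zero_pow (by omega : 0 < e), Nat.zero_add, ih]
    · rw [List.filter_cons_of_pos (by simpa)]
      simp only [List.map_cons, List.sum_cons]
      congr 1

theorem stmt_1 (b e u g x : ℕ) (hb : 2 ≤ b) (he : 1 ≤ e) (hu : 1 ≤ u) (hg : 1 ≤ g)
    (hwaring : ∀ m : ℕ, ∃ f : Fin g → ℕ, ∑ i, (f i) ^ e = m)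
    (hx : 0 < x) (hSx : S e b x = u)
    (hmin : ∀ y : ℕ, 0 < y → S e b y = u → x ≤ y) :
    u ≤ (Nat.digits b x).length * (b - 1) ^ e ∧
      (Nat.digits b x).length ≤ u / (b - 1) ^ e + g := by
  have hb1 : 1 < b := hb
  constructor
  · -- u ≤ n * (b-1)^e
    rw [← hSx]
    unfold S
    have := List.sum_le_card_nsmul ((Nat.digits b x).map (fun a => a ^ e)) ((b - 1) ^ e) ?_
    · simpa [smul_eq_mul] using this
    · intro a ha
      simp only [List.mem_map] at ha
      obtain ⟨d, hd, rfl⟩ := ha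
      have : d < b := Nat.digits_lt_base hb1 hd
      exact Nat.pow_le_pow_left (by omega) e
  · -- n ≤ u/(b-1)^e + g
    set q := u / (b - 1) ^ e with hq
    set r := u % (b - 1) ^ e with hrdef
    have hbpos : 0 < (b - 1) ^ e := Nat.pow_pos (by omega)
    have hr : r < (b - 1) ^ e := Nat.mod_lt _ hbpos
    have hqr : (b - 1) ^ e * q + r = u := Nat.div_add_mod u ((b - 1) ^ e)
    obtain ⟨f, hf⟩ := hwaring r
    have hflt : ∀ i, f i < b - 1 := by
      intro i
      have h1 : f i ^ e ≤ r := by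
        rw [← hf]
        exact Finset.single_le_sum (f := fun j => f j ^ e) (fun j _ => Nat.zero_le _) (Finset.mem_univ i)
      have h2 : f i ^ e < (b - 1) ^ e := lt_of_le_of_lt h1 hr
      exact lt_of_pow_lt_pow_left₀ e (Nat.zero_le _) h2
    set L0 := (List.ofFn f).filter (fun a => a ≠ 0) with hL0
    set L := L0 ++ List.replicate q (b - 1) with hL
    have hmemL : ∀ l ∈ L, l < b := by
      intro l hl
      rw [hL, List.mem_append] at hl
      rcases hl with hl | hl
      · have := List.mem_of_mem_filter hl
        obtain ⟨i, rfl⟩ := List.mem_ofFn.mp this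
        have := hflt i; omega
      · have := List.eq_of_mem_replicate hl; omega
    have hne0 : ∀ l ∈ L, l ≠ 0 := by
      intro l hl
      rw [hL, List.mem_append] at hl
      rcases hl with hl | hl
      · have := List.of_mem_filter hl
        simpa using this
      · have := List.eq_of_mem_replicate hl; omega
    have hsum : ((L.map (fun a => a ^ e)).sum) = u := by
      rw [hL, List.map_append, List.sum_append]
      have h0 : ((L0.map (fun a => a ^ e)).sum) = r := by
        rw [hL0, filter_pow_sum e he]
        rw [List.map_ofFn, List.sum_ofFn]
        exact hf
      have h1 : (((List.replicate q (b - 1)).map (fun a => a ^ e)).sum)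
          = q * (b - 1) ^ e := by
        simp [List.map_replicate, List.sum_replicate, smul_eq_mul]
      rw [h0, h1]
      rw [Nat.mul_comm] at hqr
      omega
    set y := Nat.ofDigits b L with hy
    have hdig : Nat.digits b y = L :=
      Nat.digits_ofDigits b hb1 L hmemL
        (fun h => hne0 _ (List.getLast_mem h))
    have hSy : S e b y = u := by rw [S, hdig, hsum]
    have hypos : 0 < y := by
      rcases Nat.eq_zero_or_pos y with h | h
      · exfalso
        rw [h] at hSy
        simp [S] at hSy
        omega
      · exact h
    have hxy : x ≤ y := hmin y hypos hSy
    calc (Nat.digits b x).length ≤ (Nat.digits b y).length :=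
          Nat.le_digits_len_le b x y hxy
      _ = L.length := by rw [hdig]
      _ ≤ q + g := by
          rw [hL, List.length_append, List.length_replicate]
          have : L0.length ≤ g := by
            rw [hL0]
            calc ((List.ofFn f).filter _).length ≤ (List.ofFn f).length :=
                  List.length_filter_le _ _
              _ = g := List.length_ofFn
          omega
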